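/- Under the setting of the inertial smoothed dynamic ẍ(t) + (α/t)ẋ(t) + ∇_x f̃(x(t),μ(t)) = 0 with α > 0 and inf f > −∞, the energy W(t) = (1/2)‖ẋ(t)‖² + f̃(x(t),μ(t)) + κμ(t) converges as t → ∞ and ∫_{t₀}^∞ (1/t) ‖ẋ(t)‖² dt < ∞. -/

import Mathlib

open MeasureTheory Filter Asymptotics Set
open scoped RealInnerProductSpace Topology

theorem stmt7 {H : Type*} [NormedAddCommGroup H] [InnerProductSpace ℝ H] [CompleteSpace H]
    (f : H → ℝ) (hf : ConvexOn ℝ Set.univ f)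
    (ftil : H → ℝ → ℝ) (κ : ℝ) (hκ : 0 < κ)
    (hconv : ∀ m : ℝ, 0 < m → ConvexOn ℝ Set.univ (fun z => ftil z m))
    (dmu : H → ℝ → ℝ)
    (hdmu : ∀ (z : H) (m : ℝ), 0 < m → HasDerivAt (fun m' => ftil z m') (dmu z m) m)
    (hdmubd : ∀ (z : H) (m : ℝ), 0 < m → |dmu z m| ≤ κ)
    (happrox : ∀ (z : H) (m : ℝ), 0 < m → |ftil z m - f z| ≤ κ * m)
    (G : H → ℝ → H)
    (hG : ∀ (z : H) (m : ℝ), 0 < m → HasGradientAt (fun w => ftil w m) (G z m) z)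
    (t₀ α : ℝ) (ht₀ : 0 < t₀) (hα : 0 < α)
    (μ μ' : ℝ → ℝ) (hμpos : ∀ t, t₀ ≤ t → 0 < μ t)
    (hμderiv : ∀ t, t₀ ≤ t → HasDerivAt μ (μ' t) t)
    (hμdec : ∀ t, t₀ ≤ t → μ' t ≤ 0)
    (hμlim : Filter.Tendsto μ Filter.atTop (nhds 0))
    (x x' x'' : ℝ → H)
    (hx : ∀ t, t₀ ≤ t → HasDerivAt x (x' t) t)
    (hx' : ∀ t, t₀ ≤ t → HasDerivAt x' (x'' t) t)
    (heq : ∀ t, t₀ ≤ t → x'' t + (α / t) • x' t + G (x t) (μ t) = 0)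
    (hbdd : BddBelow (Set.range f)) :
    (∃ l : ℝ, Filter.Tendsto (fun s => (1/2) * ‖x' s‖^2 + ftil (x s) (μ s) + κ * μ s) Filter.atTop (nhds l)) ∧
      IntegrableOn (fun t => (1 / t) * ‖x' t‖^2) (Set.Ici t₀) := by
  set W : ℝ → ℝ := fun s => (1/2) * ‖x' s‖^2 + ftil (x s) (μ s) + κ * μ s with hW
  set g : ℝ → ℝ := fun τ => (α / τ) * ‖x' τ‖^2 with hgdef
  -- μ is antitone on Ici t₀
  have hμanti : AntitoneOn μ (Ici t₀) := by
    apply antitoneOn_of_deriv_nonpos (convex_Ici t₀)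
    · exact fun t ht => (hμderiv t ht).continuousAt.continuousWithinAt
    · intro t ht
      rw [interior_Ici] at ht
      exact (hμderiv t ht.le).differentiableAt.differentiableWithinAt
    · intro t ht
      rw [interior_Ici] at ht
      rw [(hμderiv t ht.le).deriv]
      exact hμdec t ht.le
  -- Lipschitz-type bound in the smoothing parameter
  have hLip : ∀ (z : H) (m₁ m₂ : ℝ), 0 < m₁ → 0 < m₂ →
      |ftil z m₁ - ftil z m₂| ≤ κ * |m₁ - m₂| := by
    intro z m₁ m₂ h₁ h₂
    have := (convex_Ioi (0:ℝ)).norm_image_sub_le_of_norm_hasDerivWithin_le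
      (f := fun m => ftil z m) (f' := fun m => dmu z m) (C := κ)
      (fun m hm => (hdmu z m hm).hasDerivWithinAt)
      (fun m hm => by simpa [Real.norm_eq_abs] using hdmubd z m hm) h₂ h₁
    simpa [Real.norm_eq_abs, abs_sub_comm] using this
  have hκm : ∀ (z : H) (m₁ m₂ : ℝ), 0 < m₂ → m₂ ≤ m₁ →
      ftil z m₂ + κ * m₂ ≤ ftil z m₁ + κ * m₁ := by
    intro z m₁ m₂ h₂ hle
    have h₁ : 0 < m₁ := lt_of_lt_of_le h₂ hle
    have h := hLip z m₂ m₁ h₂ h₁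
    rw [abs_of_nonpos (by linarith : m₂ - m₁ ≤ 0)] at h
    have h' := (abs_le.1 h).2
    nlinarith [h']
  -- continuity of W on Ici t₀
  have hWcont : ContinuousOn W (Ici t₀) := by
    intro s hs
    have hμs := hμpos s hs
    have h1 : ContinuousWithinAt (fun t => ftil (x t) (μ s)) (Ici t₀) s :=
      (((hG (x s) (μ s) hμs).hasFDerivAt.differentiableAt.continuousAt).comp
        (hx s hs).continuousAt).continuousWithinAt
    have h2 : Tendsto (fun t => ftil (x t) (μ t) - ftil (x t) (μ s)) (𝓝[Ici t₀] s) (𝓝 0) := by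
      have hb : Tendsto (fun t => κ * |μ t - μ s|) (𝓝[Ici t₀] s) (𝓝 0) := by
        have hμc : Tendsto μ (𝓝[Ici t₀] s) (𝓝 (μ s)) :=
          (hμderiv s hs).continuousAt.continuousWithinAt
        have : Tendsto (fun t => κ * |μ t - μ s|) (𝓝[Ici t₀] s) (𝓝 (κ * |μ s - μ s|)) :=
          (tendsto_const_nhds.mul ((hμc.sub tendsto_const_nhds).abs))
        simpa using this
      apply squeeze_zero_norm' _ hb
      filter_upwards [self_mem_nhdsWithin] with t ht
      simpa [Real.norm_eq_abs] using hLip (x t) (μ t) (μ s) (hμpos t ht) hμs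
    have hB : ContinuousWithinAt (fun t => ftil (x t) (μ t)) (Ici t₀) s := by
      have := h1.tendsto.add h2
      rw [add_zero] at this
      refine Tendsto.congr (fun t => by ring) this
    have hA : ContinuousWithinAt (fun t => (1/2 : ℝ) * ‖x' t‖^2) (Ici t₀) s :=
      (continuousAt_const.mul (((hx' s hs).continuousAt.norm).pow 2)).continuousWithinAt
    have hC : ContinuousWithinAt (fun t => κ * μ t) (Ici t₀) s :=
      (continuousAt_const.mul (hμderiv s hs).continuousAt).continuousWithinAt
    exact (hA.add hB).add hC
  -- continuity of g on Ici t₀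
  have hgcont : ContinuousOn g (Ici t₀) := by
    intro τ hτ
    have hτ0 : (0:ℝ) < τ := lt_of_lt_of_le ht₀ hτ
    exact ((continuousAt_const.div continuousAt_id hτ0.ne').mul
      (((hx' τ hτ).continuousAt.norm).pow 2)).continuousWithinAt
  have hgint : ∀ a b, t₀ ≤ a → a ≤ b → IntervalIntegrable g volume a b := by
    intro a b ha hab
    apply ContinuousOn.intervalIntegrable
    rw [uIcc_of_le hab]
    exact hgcont.mono (fun τ hτ => le_trans ha hτ.1)
  -- the main energy estimate
  have main : ∀ a b, t₀ ≤ a → a ≤ b → W b + ∫ τ in a..b, g τ ≤ W a := by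
    intro a b ha hab
    have hIcc : Icc a b ⊆ Ici t₀ := fun τ hτ => le_trans ha hτ.1
    have key : W b ≤ W a - ∫ τ in a..b, g τ := by
      refine image_le_of_liminf_slope_right_le_deriv_boundary (f := W) (a := a) (b := b)
        (B := fun u => W a - ∫ τ in a..u, g τ) (B' := fun u => -g u)
        (hWcont.mono hIcc) ?_ ?_ ?_ ?_ (right_mem_Icc.2 hab)
      · simp
      · apply continuousOn_const.sub
        have hint : IntegrableOn g (uIcc a b) := by
          rw [uIcc_of_le hab]
          exact (hgcont.mono hIcc).integrableOn_compact isCompact_Icc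
        have hcp := intervalIntegral.continuousOn_primitive_interval hint
        rwa [uIcc_of_le hab] at hcp
      · -- right derivative of the boundary function
        intro u hu
        have hu0 : t₀ ≤ u := le_trans ha hu.1
        have hmeas : StronglyMeasurableAtFilter g (𝓝[>] u) :=
          ⟨Ici t₀, mem_of_superset self_mem_nhdsWithin
              (fun z hz => le_trans hu0 (le_of_lt hz)),
            hgcont.aestronglyMeasurable measurableSet_Ici⟩
        have hd : HasDerivWithinAt (fun v => ∫ τ in a..v, g τ) (g u) (Ici u) u :=
          intervalIntegral.integral_hasDerivWithinAt_right (hgint a u ha hu.1) hmeas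
            ((hgcont u hu0).mono (fun z hz => le_trans hu0 (le_of_lt hz)))
        simpa using hd.const_sub (W a)
      · -- liminf slope bound
        intro u hu r hr
        have hu0 : t₀ ≤ u := le_trans ha hu.1
        have hμu := hμpos u hu0
        set φ : ℝ → ℝ := fun τ => (1/2) * ‖x' τ‖^2 + ftil (x τ) (μ u) + κ * μ u with hφdef
        have hφd : HasDerivAt φ (-g u) u := by
          have hA : HasDerivAt (fun τ => (1/2 : ℝ) * ‖x' τ‖^2)
              ((1/2) * (⟪x' u, x'' u⟫ + ⟪x'' u, x' u⟫)) u := by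
            have h := ((hx' u hu0).inner ℝ (hx' u hu0)).const_mul (1/2 : ℝ)
            refine HasDerivAt.congr_of_eventuallyEq h ?_
            filter_upwards with τ
            rw [real_inner_self_eq_norm_sq]
          have hB : HasDerivAt (fun τ => ftil (x τ) (μ u)) (⟪G (x u) (μ u), x' u⟫) u := by
            have h := (hG (x u) (μ u) hμu).hasFDerivAt.comp_hasDerivAt u (hx u hu0)
            simpa [InnerProductSpace.toDual_apply_apply, Function.comp_def] using h
          have h := (hA.add hB).add_const (κ * μ u)
          have harr : x'' u = -((α/u) • x' u + G (x u) (μ u)) := by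
            have h0 := heq u hu0
            rwa [add_assoc, add_eq_zero_iff_eq_neg] at h0
          have : (1/2) * (⟪x' u, x'' u⟫ + ⟪x'' u, x' u⟫) + ⟪G (x u) (μ u), x' u⟫
              = -g u := by
            rw [harr]
            simp only [inner_neg_left, inner_neg_right, inner_add_left, inner_add_right,
              real_inner_smul_left, real_inner_smul_right, hgdef]
            rw [real_inner_self_eq_norm_sq, real_inner_comm (G (x u) (μ u)) (x' u)]
            ring
          rwa [this] at h
        have hWφ : ∀ z, u ≤ z → W z ≤ φ z := by
          intro z hz
          have hz0 : t₀ ≤ z := le_trans hu0 hz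
          have := hκm (x z) (μ u) (μ z) (hμpos z hz0) (hμanti hu0 hz0 hz)
          simp only [hW, hφdef]
          linarith
        have hWu : W u = φ u := rfl
        have hs : Tendsto (slope φ u) (𝓝[>] u) (𝓝 (-g u)) :=
          (hasDerivAt_iff_tendsto_slope.1 hφd).mono_left
            (nhdsWithin_mono u (fun z hz => ne_of_gt hz))
        have hev : ∀ᶠ z in 𝓝[>] u, slope W u z < r := by
          filter_upwards [hs.eventually (eventually_lt_nhds hr), self_mem_nhdsWithin]
            with z hz1 hz2
          have hz3 : u < z := hz2
          refine lt_of_le_of_lt ?_ hz1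
          rw [slope_def_field, slope_def_field,
            div_le_div_iff_of_pos_right (by linarith : (0:ℝ) < z - u)]
          linarith [hWφ z (le_of_lt hz3), hWu.le, hWu.ge]
        exact hev.frequently
    linarith
  -- integral of g is nonnegative
  have hgnn : ∀ a b, t₀ ≤ a → a ≤ b → 0 ≤ ∫ τ in a..b, g τ := by
    intro a b ha hab
    apply intervalIntegral.integral_nonneg hab
    intro τ hτ
    have : (0:ℝ) < τ := lt_of_lt_of_le ht₀ (le_trans ha hτ.1)
    positivity
  have hWanti : ∀ a b, t₀ ≤ a → a ≤ b → W b ≤ W a := by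
    intro a b ha hab
    have := main a b ha hab
    have := hgnn a b ha hab
    linarith
  -- lower bound for W
  obtain ⟨c, hc⟩ := hbdd
  have hWlb : ∀ t, t₀ ≤ t → c ≤ W t := by
    intro t ht
    have hμt := hμpos t ht
    have h1 := (abs_le.1 (happrox (x t) (μ t) hμt)).1
    have h2 : c ≤ f (x t) := hc (mem_range_self (x t))
    have h3 : (0:ℝ) ≤ (1/2) * ‖x' t‖^2 := by positivity
    simp only [hW]
    linarith
  constructor
  · -- convergence of W
    set V : ℝ → ℝ := fun t => W (max t t₀) with hV
    have hVanti : Antitone V := by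
      intro a b hab
      exact hWanti _ _ (le_max_right a t₀) (max_le_max hab le_rfl)
    have hVbdd : BddBelow (range V) := by
      refine ⟨c, ?_⟩
      rintro y ⟨t, rfl⟩
      exact hWlb _ (le_max_right t t₀)
    refine ⟨⨅ t, V t, ?_⟩
    have := tendsto_atTop_ciInf hVanti hVbdd
    refine this.congr' ?_
    filter_upwards [eventually_ge_atTop t₀] with t ht
    simp [hV, max_eq_left ht]
  · -- integrability
    rw [integrableOn_Ici_iff_integrableOn_Ioi]
    set h : ℝ → ℝ := fun τ => (1/τ) * ‖x' τ‖^2 with hhdef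
    have hhcont : ContinuousOn h (Ici t₀) := by
      intro τ hτ
      have hτ0 : (0:ℝ) < τ := lt_of_lt_of_le ht₀ hτ
      exact ((continuousAt_const.div continuousAt_id hτ0.ne').mul
        (((hx' τ hτ).continuousAt.norm).pow 2)).continuousWithinAt
    apply integrableOn_Ioi_of_intervalIntegral_norm_bounded ((W t₀ - c)/α) t₀
      (f := h) (b := id) (l := atTop) _ tendsto_id
    · filter_upwards [eventually_ge_atTop t₀] with b hb
      have hIcc : Icc t₀ b ⊆ Ici t₀ := fun τ hτ => hτ.1
      have heqint : ∫ τ in t₀..b, ‖h τ‖ = (1/α) * ∫ τ in t₀..b, g τ := by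
        rw [← intervalIntegral.integral_const_mul]
        apply intervalIntegral.integral_congr
        intro τ hτ
        rw [uIcc_of_le hb] at hτ
        have hτ0 : (0:ℝ) < τ := lt_of_lt_of_le ht₀ hτ.1
        simp only [hhdef, hgdef]
        rw [Real.norm_eq_abs, abs_of_nonneg (by positivity)]
        field_simp
      simp only [id_eq]
      rw [heqint]
      have h1 := main t₀ b le_rfl hb
      have h2 := hWlb b hb
      have h3 : ∫ τ in t₀..b, g τ ≤ W t₀ - c := by linarith
      calc (1/α) * ∫ τ in t₀..b, g τ ≤ (1/α) * (W t₀ - c) :=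
            mul_le_mul_of_nonneg_left h3 (by positivity)
        _ = (W t₀ - c)/α := by ring
    · intro b
      simp only [id_eq]
      by_cases hb : t₀ ≤ b
      · exact ((hhcont.mono (fun τ hτ => hτ.1)).integrableOn_compact isCompact_Icc).mono_set
          (Ioc_subset_Icc_self)
      · push_neg at hb
        rw [Ioc_eq_empty (not_lt.mpr hb.le)]
        exact integrableOn_empty
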